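/- Let A1 := A^{(1)}[(5,6,7)→(2,3,4)], A2 := A^{(2)}[(1,6,7)→(5,3,4)], A3 := A^{(3)}[(1,2,7)→(5,6,4)], A4 := A^{(4)}[(1,2,3)→(5,6,7)], and let M := (A1)_{123}·(A2)_{145}·(A3)_{246}·(A4)_{356} be the 6×6 matrix of the left-hand side of the heptagon relation, where M_{rst} denotes the 6×6 matrix acting as M on coordinates (r,s,t) and as the identity elsewhere. Then for every edge {a,b} ⊆ {1,…,7} (a ≠ b), the row of boundary input components of the edge vector is mapped to the row of boundary output components: (e_{ab}(u_{15}), e_{ab}(u_{16}), e_{ab}(u_{17}), e_{ab}(u_{26}), e_{ab}(u_{27}), e_{ab}(u_{37})) · M = (e_{ab}(u_{25}), e_{ab}(u_{35}), e_{ab}(u_{45}), e_{ab}(u_{36}), e_{ab}(u_{46}), e_{ab}(u_{47})), where u_{pq} := {1,…,7}\{p,q}. -/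

import Mathlib

/-- The determinant `d_{ijk}` built from the columns `(α_i,β_i,γ_i)`, `(α_j,β_j,γ_j)`,
`(α_k,β_k,γ_k)`. -/
noncomputable def dd {F : Type*} [Field F] (al be ga : Fin 7 → F) (i j k : Fin 7) : F :=
  Matrix.det !![al i, al j, al k; be i, be j, be k; ga i, ga j, ga k]

/-- The ansatz matrix `A^{(p)}[(i₁,i₂,i₃)→(o₁,o₂,o₃)]`. -/
noncomputable def ansatz {F : Type*} [Field F] (al be ga : Fin 7 → F) (p : Fin 7)
    (inp out : Fin 3 → Fin 7) : Matrix (Fin 3) (Fin 3) F := fun a b =>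
  dd al be ga (inp (a + 1)) (out b) p * dd al be ga (inp (a + 2)) (out b) p /
    (dd al be ga (inp a) (inp (a + 1)) p * dd al be ga (inp a) (inp (a + 2)) p)

/-- `embed3 p0 p1 p2 M` is the 6×6 matrix acting as the 3×3 matrix `M` on the
coordinates `(p0,p1,p2)` and as the identity on the remaining coordinates. -/
noncomputable def embed3 {F : Type*} [Field F] (p0 p1 p2 : Fin 6)
    (M : Matrix (Fin 3) (Fin 3) F) : Matrix (Fin 6) (Fin 6) F := fun r c =>
  if r = p0 then (if c = p0 then M 0 0 else if c = p1 then M 0 1 else if c = p2 then M 0 2 else 0)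
  else if r = p1 then
    (if c = p0 then M 1 0 else if c = p1 then M 1 1 else if c = p2 then M 1 2 else 0)
  else if r = p2 then
    (if c = p0 then M 2 0 else if c = p1 then M 2 1 else if c = p2 then M 2 2 else 0)
  else if r = c then 1 else 0

/-- The edge vector `e_{ab}` evaluated at a subset `u ⊆ {1,…,7}`. -/
noncomputable def eVec {F : Type*} [Field F] (al be ga : Fin 7 → F) (a b : Fin 7)
    (u : Finset (Fin 7)) : F :=
  if a ∈ u ∧ b ∈ u then
    dd al be ga a ((uᶜ.sort (· ≤ ·)).getD 0 a) ((uᶜ.sort (· ≤ ·)).getD 1 a) *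
      dd al be ga b ((uᶜ.sort (· ≤ ·)).getD 0 a) ((uᶜ.sort (· ≤ ·)).getD 1 a)
  else 0

/-- `u_{pq} := {1,…,7} \ {p,q}`. -/
def uComp (p q : Fin 7) : Finset (Fin 7) := ({p, q} : Finset (Fin 7))ᶜ

lemma dd_swap12 {F : Type*} [Field F] (al be ga : Fin 7 → F) (i j k : Fin 7) :
    dd al be ga j i k = - dd al be ga i j k := by
  simp [dd, Matrix.det_fin_three]; ring

lemma dd_zero1 {F : Type*} [Field F] (al be ga : Fin 7 → F) (i k : Fin 7) :
    dd al be ga i i k = 0 := by simp [dd, Matrix.det_fin_three]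

lemma dd_zero2 {F : Type*} [Field F] (al be ga : Fin 7 → F) (i j : Fin 7) :
    dd al be ga i j i = 0 := by simp [dd, Matrix.det_fin_three]

lemma pswap {F : Type*} [Field F] (al be ga : Fin 7 → F) (x y i p : Fin 7) :
    dd al be ga x i p * dd al be ga y i p = dd al be ga x p i * dd al be ga y p i := by
  simp [dd, Matrix.det_fin_three]; ring

lemma pluecker {F : Type*} [Field F] (al be ga : Fin 7 → F) (x y z w p : Fin 7) :
    dd al be ga x y p * dd al be ga z w p - dd al be ga x z p * dd al be ga y w p
      + dd al be ga x w p * dd al be ga y z p = 0 := by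
  simp [dd, Matrix.det_fin_three]; ring

lemma interp {F : Type*} [Field F] (al be ga : Fin 7 → F) (x y p i1 i2 i3 o : Fin 7)
    (h12 : dd al be ga i1 i2 p ≠ 0) (h13 : dd al be ga i1 i3 p ≠ 0)
    (h23 : dd al be ga i2 i3 p ≠ 0) :
    dd al be ga x i1 p * dd al be ga y i1 p *
        (dd al be ga i2 o p * dd al be ga i3 o p /
          (dd al be ga i1 i2 p * dd al be ga i1 i3 p)) +
      dd al be ga x i2 p * dd al be ga y i2 p *
        (dd al be ga i3 o p * dd al be ga i1 o p /
          (dd al be ga i2 i3 p * dd al be ga i2 i1 p)) +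
      dd al be ga x i3 p * dd al be ga y i3 p *
        (dd al be ga i1 o p * dd al be ga i2 o p /
          (dd al be ga i3 i1 p * dd al be ga i3 i2 p)) =
    dd al be ga x o p * dd al be ga y o p := by
  rw [dd_swap12 al be ga i1 i2, dd_swap12 al be ga i1 i3, dd_swap12 al be ga i2 i3]
  field_simp
  apply mul_left_cancel₀ (mul_ne_zero (mul_ne_zero h12 h13) h23)
  symm
  linear_combination

    (dd al be ga x y p * dd al be ga i1 i2 p * dd al be ga i1 i2 p * dd al be ga i1 i3 p * dd al be ga i2 i3 p * dd al be ga i3 o p + dd al be ga x i1 p * dd al be ga y i1 p * dd al be ga i1 i2 p * dd al be ga i2 i3 p * dd al be ga i2 i3 p * dd al be ga i3 o p) * pluecker al be ga i1 i2 i3 o p +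
((-1) * dd al be ga y i1 p * dd al be ga i1 i2 p * dd al be ga i1 o p * dd al be ga i2 i3 p * dd al be ga i2 i3 p * dd al be ga i3 o p + (-1) * dd al be ga y i2 p * dd al be ga i1 i2 p * dd al be ga i1 i3 p * dd al be ga i1 o p * dd al be ga i2 i3 p * dd al be ga i3 o p) * pluecker al be ga x i1 i2 i3 p +
((-1) * dd al be ga y i1 p * dd al be ga i1 i2 p * dd al be ga i1 i2 p * dd al be ga i2 i3 p * dd al be ga i2 i3 p * dd al be ga i3 o p + (-1) * dd al be ga y i2 p * dd al be ga i1 i2 p * dd al be ga i1 i2 p * dd al be ga i1 i3 p * dd al be ga i2 i3 p * dd al be ga i3 o p + dd al be ga y i3 p * dd al be ga i1 i2 p * dd al be ga i1 i2 p * dd al be ga i1 i3 p * dd al be ga i2 i3 p * dd al be ga i2 o p) * pluecker al be ga x i1 i3 o p +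
((-1) * dd al be ga i1 i2 p * dd al be ga i1 i2 p * dd al be ga i1 i3 p * dd al be ga i2 i3 p * dd al be ga i3 o p * dd al be ga i3 o p + (-1) * dd al be ga i1 i2 p * dd al be ga i1 i3 p * dd al be ga i1 o p * dd al be ga i2 i3 p * dd al be ga i2 i3 p * dd al be ga i3 o p) * pluecker al be ga x y i1 i2 p +
(dd al be ga i1 i2 p * dd al be ga i1 i2 p * dd al be ga i1 i3 p * dd al be ga i2 i3 p * dd al be ga i2 o p * dd al be ga i3 o p) * pluecker al be ga x y i1 i3 p +
(dd al be ga x o p * dd al be ga i1 i2 p * dd al be ga i1 i2 p * dd al be ga i1 i3 p * dd al be ga i1 i3 p * dd al be ga i2 i3 p) * pluecker al be ga y i2 i3 o p +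
(dd al be ga y i1 p * dd al be ga i1 i2 p * dd al be ga i1 i2 p * dd al be ga i1 i3 p * dd al be ga i2 i3 p * dd al be ga i3 o p) * pluecker al be ga x i2 i3 o p

lemma eVec_eq {F : Type*} [Field F] (al be ga : Fin 7 → F) (x y p q : Fin 7)
    (hpq : p < q) :
    eVec al be ga x y (uComp p q) = dd al be ga x p q * dd al be ga y p q := by
  have hs : (((uComp p q) : Finset (Fin 7))ᶜ).sort (· ≤ ·) = [p, q] := by
    rw [uComp, compl_compl]
    have h1 : ∀ b ∈ ({q} : Finset (Fin 7)), p ≤ b := fun b hb => by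
      rw [Finset.mem_singleton] at hb; exact hb ▸ hpq.le
    have h2 : p ∉ ({q} : Finset (Fin 7)) := by simp [hpq.ne]
    rw [Finset.sort_insert _ h1 h2, Finset.sort_singleton]
  unfold eVec
  rw [hs]
  by_cases hx : x ∈ uComp p q ∧ y ∈ uComp p q
  · simp [hx]
  · rw [if_neg hx]
    rcases not_and_or.mp hx with h' | h' <;>
      [ (have : x = p ∨ x = q := by
          simpa [uComp, Finset.mem_insert, or_iff_not_imp_left] using h');
        (have : y = p ∨ y = q := by
          simpa [uComp, Finset.mem_insert, or_iff_not_imp_left] using h')] <;>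
      rcases this with rfl | rfl <;>
      simp [dd_zero1, dd_zero2]

lemma cons_val_five {α : Type*} {m : ℕ} (x : α) (u : Fin (m + 5) → α) :
    Matrix.vecCons x u 5 =
      Matrix.vecHead (Matrix.vecTail (Matrix.vecTail (Matrix.vecTail (Matrix.vecTail u)))) :=
  rfl

lemma step1 {F : Type*} [Field F] (al be ga : Fin 7 → F)
    (hgen : ∀ i j k : Fin 7, i ≠ j → i ≠ k → j ≠ k → dd al be ga i j k ≠ 0)
    (a b : Fin 7) :
    Matrix.vecMul ![dd al be ga a 0 4 * dd al be ga b 0 4, dd al be ga a 0 5 * dd al be ga b 0 5, dd al be ga a 0 6 * dd al be ga b 0 6, dd al be ga a 1 5 * dd al be ga b 1 5, dd al be ga a 1 6 * dd al be ga b 1 6, dd al be ga a 2 6 * dd al be ga b 2 6]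
        (embed3 0 1 2 (ansatz al be ga 0 ![4, 5, 6] ![1, 2, 3])) =
      ![dd al be ga a 0 1 * dd al be ga b 0 1, dd al be ga a 0 2 * dd al be ga b 0 2, dd al be ga a 0 3 * dd al be ga b 0 3, dd al be ga a 1 5 * dd al be ga b 1 5, dd al be ga a 1 6 * dd al be ga b 1 6, dd al be ga a 2 6 * dd al be ga b 2 6] := by
  have h12 : dd al be ga 4 5 0 ≠ 0 := hgen 4 5 0 (by decide) (by decide) (by decide)
  have h13 : dd al be ga 4 6 0 ≠ 0 := hgen 4 6 0 (by decide) (by decide) (by decide)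
  have h23 : dd al be ga 5 6 0 ≠ 0 := hgen 5 6 0 (by decide) (by decide) (by decide)
  funext j
  fin_cases j <;>
    simp [Matrix.vecMul, dotProduct, Fin.sum_univ_six, embed3, ansatz, cons_val_five]
  · rw [pswap al be ga a b 0 4, pswap al be ga a b 0 5, pswap al be ga a b 0 6, pswap al be ga a b 0 1]; exact interp al be ga a b 0 4 5 6 1 h12 h13 h23
  · rw [pswap al be ga a b 0 4, pswap al be ga a b 0 5, pswap al be ga a b 0 6, pswap al be ga a b 0 2]; exact interp al be ga a b 0 4 5 6 2 h12 h13 h23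
  · rw [pswap al be ga a b 0 4, pswap al be ga a b 0 5, pswap al be ga a b 0 6, pswap al be ga a b 0 3]; exact interp al be ga a b 0 4 5 6 3 h12 h13 h23

lemma step2 {F : Type*} [Field F] (al be ga : Fin 7 → F)
    (hgen : ∀ i j k : Fin 7, i ≠ j → i ≠ k → j ≠ k → dd al be ga i j k ≠ 0)
    (a b : Fin 7) :
    Matrix.vecMul ![dd al be ga a 0 1 * dd al be ga b 0 1, dd al be ga a 0 2 * dd al be ga b 0 2, dd al be ga a 0 3 * dd al be ga b 0 3, dd al be ga a 1 5 * dd al be ga b 1 5, dd al be ga a 1 6 * dd al be ga b 1 6, dd al be ga a 2 6 * dd al be ga b 2 6]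
        (embed3 0 3 4 (ansatz al be ga 1 ![0, 5, 6] ![4, 2, 3])) =
      ![dd al be ga a 1 4 * dd al be ga b 1 4, dd al be ga a 0 2 * dd al be ga b 0 2, dd al be ga a 0 3 * dd al be ga b 0 3, dd al be ga a 1 2 * dd al be ga b 1 2, dd al be ga a 1 3 * dd al be ga b 1 3, dd al be ga a 2 6 * dd al be ga b 2 6] := by
  have h12 : dd al be ga 0 5 1 ≠ 0 := hgen 0 5 1 (by decide) (by decide) (by decide)
  have h13 : dd al be ga 0 6 1 ≠ 0 := hgen 0 6 1 (by decide) (by decide) (by decide)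
  have h23 : dd al be ga 5 6 1 ≠ 0 := hgen 5 6 1 (by decide) (by decide) (by decide)
  funext j
  fin_cases j <;>
    simp [Matrix.vecMul, dotProduct, Fin.sum_univ_six, embed3, ansatz, cons_val_five]
  · rw [pswap al be ga a b 1 5, pswap al be ga a b 1 6, pswap al be ga a b 1 4]; exact interp al be ga a b 1 0 5 6 4 h12 h13 h23
  · rw [pswap al be ga a b 1 5, pswap al be ga a b 1 6, pswap al be ga a b 1 2]; exact interp al be ga a b 1 0 5 6 2 h12 h13 h23
  · rw [pswap al be ga a b 1 5, pswap al be ga a b 1 6, pswap al be ga a b 1 3]; exact interp al be ga a b 1 0 5 6 3 h12 h13 h23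

lemma step3 {F : Type*} [Field F] (al be ga : Fin 7 → F)
    (hgen : ∀ i j k : Fin 7, i ≠ j → i ≠ k → j ≠ k → dd al be ga i j k ≠ 0)
    (a b : Fin 7) :
    Matrix.vecMul ![dd al be ga a 1 4 * dd al be ga b 1 4, dd al be ga a 0 2 * dd al be ga b 0 2, dd al be ga a 0 3 * dd al be ga b 0 3, dd al be ga a 1 2 * dd al be ga b 1 2, dd al be ga a 1 3 * dd al be ga b 1 3, dd al be ga a 2 6 * dd al be ga b 2 6]
        (embed3 1 3 5 (ansatz al be ga 2 ![0, 1, 6] ![4, 5, 3])) =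
      ![dd al be ga a 1 4 * dd al be ga b 1 4, dd al be ga a 2 4 * dd al be ga b 2 4, dd al be ga a 0 3 * dd al be ga b 0 3, dd al be ga a 2 5 * dd al be ga b 2 5, dd al be ga a 1 3 * dd al be ga b 1 3, dd al be ga a 2 3 * dd al be ga b 2 3] := by
  have h12 : dd al be ga 0 1 2 ≠ 0 := hgen 0 1 2 (by decide) (by decide) (by decide)
  have h13 : dd al be ga 0 6 2 ≠ 0 := hgen 0 6 2 (by decide) (by decide) (by decide)
  have h23 : dd al be ga 1 6 2 ≠ 0 := hgen 1 6 2 (by decide) (by decide) (by decide)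
  funext j
  fin_cases j <;>
    simp [Matrix.vecMul, dotProduct, Fin.sum_univ_six, embed3, ansatz, cons_val_five]
  · rw [pswap al be ga a b 2 6, pswap al be ga a b 2 4]; exact interp al be ga a b 2 0 1 6 4 h12 h13 h23
  · rw [pswap al be ga a b 2 6, pswap al be ga a b 2 5]; exact interp al be ga a b 2 0 1 6 5 h12 h13 h23
  · rw [pswap al be ga a b 2 6, pswap al be ga a b 2 3]; exact interp al be ga a b 2 0 1 6 3 h12 h13 h23

lemma step4 {F : Type*} [Field F] (al be ga : Fin 7 → F)
    (hgen : ∀ i j k : Fin 7, i ≠ j → i ≠ k → j ≠ k → dd al be ga i j k ≠ 0)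
    (a b : Fin 7) :
    Matrix.vecMul ![dd al be ga a 1 4 * dd al be ga b 1 4, dd al be ga a 2 4 * dd al be ga b 2 4, dd al be ga a 0 3 * dd al be ga b 0 3, dd al be ga a 2 5 * dd al be ga b 2 5, dd al be ga a 1 3 * dd al be ga b 1 3, dd al be ga a 2 3 * dd al be ga b 2 3]
        (embed3 2 4 5 (ansatz al be ga 3 ![0, 1, 2] ![4, 5, 6])) =
      ![dd al be ga a 1 4 * dd al be ga b 1 4, dd al be ga a 2 4 * dd al be ga b 2 4, dd al be ga a 3 4 * dd al be ga b 3 4, dd al be ga a 2 5 * dd al be ga b 2 5, dd al be ga a 3 5 * dd al be ga b 3 5, dd al be ga a 3 6 * dd al be ga b 3 6] := by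
  have h12 : dd al be ga 0 1 3 ≠ 0 := hgen 0 1 3 (by decide) (by decide) (by decide)
  have h13 : dd al be ga 0 2 3 ≠ 0 := hgen 0 2 3 (by decide) (by decide) (by decide)
  have h23 : dd al be ga 1 2 3 ≠ 0 := hgen 1 2 3 (by decide) (by decide) (by decide)
  funext j
  fin_cases j <;>
    simp [Matrix.vecMul, dotProduct, Fin.sum_univ_six, embed3, ansatz, cons_val_five]
  · rw [pswap al be ga a b 3 4]; exact interp al be ga a b 3 0 1 2 4 h12 h13 h23
  · rw [pswap al be ga a b 3 5]; exact interp al be ga a b 3 0 1 2 5 h12 h13 h23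
  · rw [pswap al be ga a b 3 6]; exact interp al be ga a b 3 0 1 2 6 h12 h13 h23

/-- The 6×6 matrix `M = (A1)_{123}(A2)_{145}(A3)_{246}(A4)_{356}` (the left-hand side
of the heptagon relation) carries, for every edge `{a,b}`, the row of boundary input
components `(e_{ab}(u_{15}),…,e_{ab}(u_{37}))` of the edge vector to the row of
boundary output components `(e_{ab}(u_{25}),…,e_{ab}(u_{47}))`.
Vertices `1,…,7` are encoded as `0,…,6 : Fin 7`, positions `1,…,6` as `0,…,5 : Fin 6`. -/
theorem heptagon_lhs_maps_edgeVector_boundary {F : Type*} [Field F] (al be ga : Fin 7 → F)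
    (hgen : ∀ i j k : Fin 7, i ≠ j → i ≠ k → j ≠ k → dd al be ga i j k ≠ 0)
    (a b : Fin 7) (hab : a ≠ b) :
    Matrix.vecMul
        ![eVec al be ga a b (uComp 0 4), eVec al be ga a b (uComp 0 5),
          eVec al be ga a b (uComp 0 6), eVec al be ga a b (uComp 1 5),
          eVec al be ga a b (uComp 1 6), eVec al be ga a b (uComp 2 6)]
        (embed3 0 1 2 (ansatz al be ga 0 ![4, 5, 6] ![1, 2, 3]) *
          embed3 0 3 4 (ansatz al be ga 1 ![0, 5, 6] ![4, 2, 3]) *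
          embed3 1 3 5 (ansatz al be ga 2 ![0, 1, 6] ![4, 5, 3]) *
          embed3 2 4 5 (ansatz al be ga 3 ![0, 1, 2] ![4, 5, 6])) =
      ![eVec al be ga a b (uComp 1 4), eVec al be ga a b (uComp 2 4),
        eVec al be ga a b (uComp 3 4), eVec al be ga a b (uComp 2 5),
        eVec al be ga a b (uComp 3 5), eVec al be ga a b (uComp 3 6)] := by
  rw [eVec_eq al be ga a b 0 4 (by decide),
      eVec_eq al be ga a b 0 5 (by decide),
      eVec_eq al be ga a b 0 6 (by decide),
      eVec_eq al be ga a b 1 5 (by decide),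
      eVec_eq al be ga a b 1 6 (by decide),
      eVec_eq al be ga a b 2 6 (by decide),
      eVec_eq al be ga a b 1 4 (by decide),
      eVec_eq al be ga a b 2 4 (by decide),
      eVec_eq al be ga a b 3 4 (by decide),
      eVec_eq al be ga a b 2 5 (by decide),
      eVec_eq al be ga a b 3 5 (by decide),
      eVec_eq al be ga a b 3 6 (by decide)]
  rw [← Matrix.vecMul_vecMul, ← Matrix.vecMul_vecMul, ← Matrix.vecMul_vecMul,
    step1 al be ga hgen a b, step2 al be ga hgen a b, step3 al be ga hgen a b,
    step4 al be ga hgen a b]
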